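/- Let n = c²(2a² + 2b² − c²)/Δ, where Δ = (a+b+c)(b+c−a)(c+a−b)(a+b−c). Then (dist cB cC)² = n·a², (dist cC cA)² = n·b², and (dist cA cB)² = n·c²; hence triangle cA cB cC is similar to triangle ABC. -/

import Mathlib

open EuclideanGeometry RealInnerProductSpace
set_option maxHeartbeats 2000000

private lemma dist_sq_coord (x y : EuclideanSpace ℝ (Fin 2)) :
    dist x y ^ 2 = (x 0 - y 0)^2 + (x 1 - y 1)^2 := by
  rw [EuclideanSpace.dist_eq, Real.sq_sqrt (by positivity)]
  simp [Fin.sum_univ_two, Real.dist_eq, sq_abs]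

private lemma inner_coord (x y : EuclideanSpace ℝ (Fin 2)) :
    ⟪x, y⟫ = x 0 * y 0 + x 1 * y 1 := by
  simp [PiLp.inner_apply, Fin.sum_univ_two, RCLike.inner_apply, mul_comm]

private lemma cross_ne_zero (A B C : EuclideanSpace ℝ (Fin 2))
    (hABC : AffineIndependent ℝ ![A, B, C]) :
    (B 0 - A 0) * (C 1 - A 1) - (B 1 - A 1) * (C 0 - A 0) ≠ 0 := by
  intro hX
  have hBA : B ≠ A := by
    intro h
    have := hABC.injective (by simp [h] : (![A, B, C] : Fin 3 → _) 1 = ![A, B, C] 0)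
    simp at this
  have hc2 : 0 < (B 0 - A 0)^2 + (B 1 - A 1)^2 := by
    rcases lt_or_eq_of_le (by positivity : (0:ℝ) ≤ (B 0 - A 0)^2 + (B 1 - A 1)^2) with h | h
    · exact h
    · exfalso; apply hBA
      have h0 : B 0 - A 0 = 0 := by nlinarith [sq_nonneg (B 0 - A 0), sq_nonneg (B 1 - A 1)]
      have h1 : B 1 - A 1 = 0 := by nlinarith [sq_nonneg (B 0 - A 0), sq_nonneg (B 1 - A 1)]
      ext i; fin_cases i
      · show B 0 = A 0; linarith
      · show B 1 = A 1; linarith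
  apply affineIndependent_iff_not_collinear_set.mp hABC
  rw [collinear_iff_of_mem (Set.mem_insert A {B, C})]
  refine ⟨B - A, ?_⟩
  have hne := ne_of_gt hc2
  rintro p hp
  rcases hp with rfl | rfl | h
  · exact ⟨0, by simp⟩
  · refine ⟨1, ?_⟩
    ext i
    show p i = ((1:ℝ) • (p - A) + A) i
    simp [PiLp.add_apply, PiLp.sub_apply]
  · rw [Set.mem_singleton_iff] at h
    subst h
    set t : ℝ := ((p 0 - A 0) * (B 0 - A 0) + (p 1 - A 1) * (B 1 - A 1)) /
      ((B 0 - A 0)^2 + (B 1 - A 1)^2) with ht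
    refine ⟨t, ?_⟩
    have e0 : p 0 = t * (B 0 - A 0) + A 0 := by
      rw [ht]; field_simp
      linear_combination (-(B 1 - A 1)) * hX
    have e1 : p 1 = t * (B 1 - A 1) + A 1 := by
      rw [ht]; field_simp
      linear_combination (B 0 - A 0) * hX
    ext i
    show p i = (t • (B - A) + A) i
    fin_cases i
    · show p 0 = t * (B 0 - A 0) + A 0; exact e0
    · show p 1 = t * (B 1 - A 1) + A 1; exact e1

private lemma sq_add_sq_zero {x y : ℝ} (h : (0:ℝ) = x^2 + y^2) : x = 0 ∧ y = 0 := by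
  constructor <;> nlinarith [sq_nonneg x, sq_nonneg y]

theorem triangle_cA_cB_cC_similar
    (A B C O cA cB cC : EuclideanSpace ℝ (Fin 2))
    (hABC : AffineIndependent ℝ ![A, B, C])
    (a b c : ℝ) (ha : a = dist B C) (hb : b = dist C A) (hc : c = dist A B)
    (hO : O = (⟨![A, B, C], hABC⟩ : Affine.Triangle ℝ (EuclideanSpace ℝ (Fin 2))).circumcenter)
    (hcC : cC = EuclideanGeometry.reflection (affineSpan ℝ {A, B}) O)
    (hcA1 : dist cA C = dist cA A) (hcA2 : ⟪cA - A, B - A⟫ = 0)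
    (hcB1 : dist cB C = dist cB B) (hcB2 : ⟪cB - B, A - B⟫ = 0)
    (n : ℝ)
    (hn : n = c^2 * (2*a^2 + 2*b^2 - c^2) / ((a+b+c)*(b+c-a)*(c+a-b)*(a+b-c))) :
    ((dist cB cC)^2 = n * a^2 ∧ (dist cC cA)^2 = n * b^2 ∧ (dist cA cB)^2 = n * c^2) ∧
    ∃ r : ℝ, 0 < r ∧ dist cB cC = r * dist B C ∧ dist cC cA = r * dist C A ∧
      dist cA cB = r * dist A B := by
  have hX : (B 0 - A 0) * (C 1 - A 1) - (B 1 - A 1) * (C 0 - A 0) ≠ 0 :=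
    cross_ne_zero A B C hABC
  set X : ℝ := (B 0 - A 0) * (C 1 - A 1) - (B 1 - A 1) * (C 0 - A 0) with hXdef
  -- squared side lengths in coordinates
  have ha2 : a^2 = (B 0 - C 0)^2 + (B 1 - C 1)^2 := by rw [ha, dist_sq_coord]
  have hb2 : b^2 = (C 0 - A 0)^2 + (C 1 - A 1)^2 := by rw [hb, dist_sq_coord]
  have hc2 : c^2 = (A 0 - B 0)^2 + (A 1 - B 1)^2 := by rw [hc, dist_sq_coord]
  -- Delta = 4 X^2
  have hDelta : (a+b+c)*(b+c-a)*(c+a-b)*(a+b-c) = 4*X^2 := by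
    linear_combination (2*b^2 + 2*c^2 - a^2 - ((B 0 - C 0)^2 + (B 1 - C 1)^2)) * ha2
      + (2*((B 0 - C 0)^2 + (B 1 - C 1)^2) + 2*c^2 - b^2 - ((C 0 - A 0)^2 + (C 1 - A 1)^2)) * hb2
      + (2*((B 0 - C 0)^2 + (B 1 - C 1)^2) + 2*((C 0 - A 0)^2 + (C 1 - A 1)^2) - c^2
          - ((A 0 - B 0)^2 + (A 1 - B 1)^2)) * hc2
  -- circumcenter distance equalities
  have eOAB : dist O A = dist O B := by
    have e0 := (⟨![A, B, C], hABC⟩ :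
      Affine.Triangle ℝ (EuclideanSpace ℝ (Fin 2))).dist_circumcenter_eq_circumradius 0
    have e1 := (⟨![A, B, C], hABC⟩ :
      Affine.Triangle ℝ (EuclideanSpace ℝ (Fin 2))).dist_circumcenter_eq_circumradius 1
    simp only [Matrix.cons_val_zero, Matrix.cons_val_one, Matrix.head_cons] at e0 e1
    rw [← hO] at e0 e1
    rw [dist_comm O A, dist_comm O B, e0, e1]
  have eOAC : dist O A = dist O C := by
    have e0 := (⟨![A, B, C], hABC⟩ :
      Affine.Triangle ℝ (EuclideanSpace ℝ (Fin 2))).dist_circumcenter_eq_circumradius 0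
    have e2 := (⟨![A, B, C], hABC⟩ :
      Affine.Triangle ℝ (EuclideanSpace ℝ (Fin 2))).dist_circumcenter_eq_circumradius 2
    simp only [Matrix.cons_val_zero, Matrix.cons_val_two, Matrix.tail_cons,
      Matrix.head_cons] at e0 e2
    rw [← hO] at e0 e2
    rw [dist_comm O A, dist_comm O C, e0, e2]
  -- coordinate versions
  have fOAB : (O 0 - A 0)^2 + (O 1 - A 1)^2 = (O 0 - B 0)^2 + (O 1 - B 1)^2 := by
    have h2 : dist O A ^ 2 = dist O B ^ 2 := by rw [eOAB]
    rwa [dist_sq_coord, dist_sq_coord] at h2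
  have fOAC : (O 0 - A 0)^2 + (O 1 - A 1)^2 = (O 0 - C 0)^2 + (O 1 - C 1)^2 := by
    have h2 : dist O A ^ 2 = dist O C ^ 2 := by rw [eOAC]
    rwa [dist_sq_coord, dist_sq_coord] at h2
  -- cC coordinates via reflection
  have hcC0 : cC 0 = A 0 + B 0 - O 0 ∧ cC 1 = A 1 + B 1 - O 1 := by
    have hm : midpoint ℝ A B = (2:ℝ)⁻¹ • (A + B) := by
      rw [midpoint_eq_smul_add, invOf_eq_inv]
    have hinner : ⟪A -ᵥ B, midpoint ℝ A B -ᵥ O⟫ = 0 := by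
      simp only [PiLp.inner_apply, Fin.sum_univ_two, RCLike.inner_apply, conj_trivial]
      have k0 : (A -ᵥ B) 0 = A 0 - B 0 := rfl
      have k1 : (A -ᵥ B) 1 = A 1 - B 1 := rfl
      have m0 : (midpoint ℝ A B -ᵥ O) 0 = (2:ℝ)⁻¹ * (A 0 + B 0) - O 0 := by rw [hm]; rfl
      have m1 : (midpoint ℝ A B -ᵥ O) 1 = (2:ℝ)⁻¹ * (A 1 + B 1) - O 1 := by rw [hm]; rfl
      rw [k0, k1, m0, m1]
      linear_combination ((1:ℝ)/2) * fOAB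
    have hmem : midpoint ℝ A B ∈ affineSpan ℝ {A, B} := by
      rw [← lineMap_one_half]
      exact AffineMap.lineMap_mem_affineSpan_pair _ _ _
    have horth : midpoint ℝ A B ∈ AffineSubspace.mk' O (affineSpan ℝ {A, B}).directionᗮ := by
      rw [AffineSubspace.mem_mk']
      rw [direction_affineSpan, vectorSpan_pair]
      intro w hw
      rcases Submodule.mem_span_singleton.mp hw with ⟨r, rfl⟩
      rw [inner_smul_left]
      simp only [conj_trivial]
      rw [hinner, mul_zero]
    have hproj : (orthogonalProjection (affineSpan ℝ {A, B}) O : EuclideanSpace ℝ (Fin 2))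
        = midpoint ℝ A B := by
      have hint := inter_eq_singleton_orthogonalProjection (s := affineSpan ℝ {A, B}) O
      have hm2 : midpoint ℝ A B ∈ ((affineSpan ℝ {A, B} : Set (EuclideanSpace ℝ (Fin 2)))
          ∩ AffineSubspace.mk' O (affineSpan ℝ {A, B}).directionᗮ) := ⟨hmem, horth⟩
      rw [hint, Set.mem_singleton_iff] at hm2
      exact hm2.symm
    have hcC' : cC = (midpoint ℝ A B -ᵥ O) +ᵥ midpoint ℝ A B := by
      rw [hcC, EuclideanGeometry.reflection_apply', hproj]
    constructor
    · have h : cC 0 = ((midpoint ℝ A B -ᵥ O) +ᵥ midpoint ℝ A B) 0 := by rw [hcC']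
      rw [hm] at h
      have h' : cC 0 = ((2:ℝ)⁻¹ * (A 0 + B 0) - O 0) + (2:ℝ)⁻¹ * (A 0 + B 0) := h
      rw [h']; ring
    · have h : cC 1 = ((midpoint ℝ A B -ᵥ O) +ᵥ midpoint ℝ A B) 1 := by rw [hcC']
      rw [hm] at h
      have h' : cC 1 = ((2:ℝ)⁻¹ * (A 1 + B 1) - O 1) + (2:ℝ)⁻¹ * (A 1 + B 1) := h
      rw [h']; ring
  obtain ⟨gC0, gC1⟩ := hcC0
  -- O coordinates
  have h2X : (2*X) ≠ 0 := by simpa using hX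
  have hO0 : O 0 = A 0 + (((A 0 - B 0)^2 + (A 1 - B 1)^2) * (C 1 - A 1)
      - ((C 0 - A 0)^2 + (C 1 - A 1)^2) * (B 1 - A 1)) / (2*X) := by
    have key : (2*X) * (O 0 - A 0) = ((A 0 - B 0)^2 + (A 1 - B 1)^2) * (C 1 - A 1)
        - ((C 0 - A 0)^2 + (C 1 - A 1)^2) * (B 1 - A 1) := by
      linear_combination (C 1 - A 1) * fOAB + (A 1 - B 1) * fOAC
    rw [← key]; field_simp; ring
  have hO1 : O 1 = A 1 + (((C 0 - A 0)^2 + (C 1 - A 1)^2) * (B 0 - A 0)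
      - ((A 0 - B 0)^2 + (A 1 - B 1)^2) * (C 0 - A 0)) / (2*X) := by
    have key : (2*X) * (O 1 - A 1) = ((C 0 - A 0)^2 + (C 1 - A 1)^2) * (B 0 - A 0)
        - ((A 0 - B 0)^2 + (A 1 - B 1)^2) * (C 0 - A 0) := by
      linear_combination (A 0 - C 0) * fOAB + (B 0 - A 0) * fOAC
    rw [← key]; field_simp; ring
  -- cA coordinates
  have fA1 : (cA 0 - C 0)^2 + (cA 1 - C 1)^2 = (cA 0 - A 0)^2 + (cA 1 - A 1)^2 := by
    have h2 : dist cA C ^ 2 = dist cA A ^ 2 := by rw [hcA1]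
    rwa [dist_sq_coord, dist_sq_coord] at h2
  have fA2 : (cA 0 - A 0) * (B 0 - A 0) + (cA 1 - A 1) * (B 1 - A 1) = 0 := by
    rw [inner_coord] at hcA2
    have k0 : (cA - A) 0 = cA 0 - A 0 := rfl
    have k1 : (cA - A) 1 = cA 1 - A 1 := rfl
    have l0 : (B - A) 0 = B 0 - A 0 := rfl
    have l1 : (B - A) 1 = B 1 - A 1 := rfl
    rw [k0, k1, l0, l1] at hcA2
    exact hcA2
  have hcA0 : cA 0 = A 0 - (((C 0 - A 0)^2 + (C 1 - A 1)^2) * (B 1 - A 1)) / (2*X) := by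
    have key : (2*X) * (cA 0 - A 0) = -(((C 0 - A 0)^2 + (C 1 - A 1)^2) * (B 1 - A 1)) := by
      linear_combination (2*(C 1 - A 1)) * fA2 + (B 1 - A 1) * fA1
    field_simp
    linear_combination key
  have hcA1' : cA 1 = A 1 + (((C 0 - A 0)^2 + (C 1 - A 1)^2) * (B 0 - A 0)) / (2*X) := by
    have key : (2*X) * (cA 1 - A 1) = ((C 0 - A 0)^2 + (C 1 - A 1)^2) * (B 0 - A 0) := by
      linear_combination (2*(A 0 - C 0)) * fA2 + (A 0 - B 0) * fA1
    field_simp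
    linear_combination key
  -- cB coordinates
  have fB1 : (cB 0 - C 0)^2 + (cB 1 - C 1)^2 = (cB 0 - B 0)^2 + (cB 1 - B 1)^2 := by
    have h2 : dist cB C ^ 2 = dist cB B ^ 2 := by rw [hcB1]
    rwa [dist_sq_coord, dist_sq_coord] at h2
  have fB2 : (cB 0 - B 0) * (A 0 - B 0) + (cB 1 - B 1) * (A 1 - B 1) = 0 := by
    rw [inner_coord] at hcB2
    have k0 : (cB - B) 0 = cB 0 - B 0 := rfl
    have k1 : (cB - B) 1 = cB 1 - B 1 := rfl
    have l0 : (A - B) 0 = A 0 - B 0 := rfl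
    have l1 : (A - B) 1 = A 1 - B 1 := rfl
    rw [k0, k1, l0, l1] at hcB2
    exact hcB2
  have hcB0 : cB 0 = B 0 - (((B 0 - C 0)^2 + (B 1 - C 1)^2) * (B 1 - A 1)) / (2*X) := by
    have key : (2*X) * (cB 0 - B 0) = -(((B 0 - C 0)^2 + (B 1 - C 1)^2) * (B 1 - A 1)) := by
      linear_combination (2*(B 1 - C 1)) * fB2 + (B 1 - A 1) * fB1
    field_simp
    linear_combination key
  have hcB1' : cB 1 = B 1 + (((B 0 - C 0)^2 + (B 1 - C 1)^2) * (B 0 - A 0)) / (2*X) := by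
    have key : (2*X) * (cB 1 - B 1) = ((B 0 - C 0)^2 + (B 1 - C 1)^2) * (B 0 - A 0) := by
      linear_combination (2*(C 0 - B 0)) * fB2 + (A 0 - B 0) * fB1
    field_simp
    linear_combination key
  -- rewrite n
  have hn4 : n = c^2 * (2*a^2 + 2*b^2 - c^2) / (4*X^2) := by rw [hn, hDelta]
  -- the three squared-distance identities
  have hX2 : (4:ℝ)*X^2 ≠ 0 := by positivity
  have goal1 : (dist cB cC)^2 = n * a^2 := by
    rw [dist_sq_coord, gC0, gC1, hO0, hO1, hcB0, hcB1', hn4, ha2, hb2, hc2]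
    field_simp
    ring
  have goal2 : (dist cC cA)^2 = n * b^2 := by
    rw [dist_sq_coord, gC0, gC1, hO0, hO1, hcA0, hcA1', hn4, ha2, hb2, hc2]
    field_simp
    ring
  have goal3 : (dist cA cB)^2 = n * c^2 := by
    rw [dist_sq_coord, hcA0, hcA1', hcB0, hcB1', hn4, ha2, hb2, hc2]
    field_simp
    ring
  -- positivity of n
  have hAB : A ≠ B := by
    intro h
    have := hABC.injective (by simp [h] : (![A, B, C] : Fin 3 → _) 0 = ![A, B, C] 1)
    simp at this
  have hcpos : 0 < c := by rw [hc]; exact dist_pos.mpr hAB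
  have hm0 : 2*a^2 + 2*b^2 - c^2 = (A 0 + B 0 - 2*C 0)^2 + (A 1 + B 1 - 2*C 1)^2 := by
    linear_combination 2*ha2 + 2*hb2 - hc2
  have hmpos : 0 < 2*a^2 + 2*b^2 - c^2 := by
    rw [hm0]
    rcases lt_or_eq_of_le (by positivity : (0:ℝ) ≤ (A 0 + B 0 - 2*C 0)^2 + (A 1 + B 1 - 2*C 1)^2)
      with h | h
    · exact h
    · exfalso
      obtain ⟨e1, e2⟩ := sq_add_sq_zero h
      apply hX
      rw [hXdef]
      linear_combination ((B 1 - A 1)/2) * e1 - ((B 0 - A 0)/2) * e2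
  have hnpos : 0 < n := by
    rw [hn4]
    have hXsq : 0 < X^2 := pow_two_pos_of_ne_zero hX
    have h4 : (0:ℝ) < 4*X^2 := by linarith
    exact div_pos (mul_pos (by positivity) hmpos) h4
  have ha0 : 0 ≤ a := by rw [ha]; exact dist_nonneg
  have hb0 : 0 ≤ b := by rw [hb]; exact dist_nonneg
  have hc0 : 0 ≤ c := le_of_lt hcpos
  have hrpos : 0 < Real.sqrt n := Real.sqrt_pos.mpr hnpos
  refine ⟨⟨goal1, goal2, goal3⟩, Real.sqrt n, hrpos, ?_, ?_, ?_⟩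
  · rw [← ha]
    have hsq : (dist cB cC)^2 = (Real.sqrt n * a)^2 := by
      rw [goal1, mul_pow, Real.sq_sqrt hnpos.le]
    have := congrArg Real.sqrt hsq
    rwa [Real.sqrt_sq dist_nonneg, Real.sqrt_sq (mul_nonneg (Real.sqrt_nonneg n) ha0)] at this
  · rw [← hb]
    have hsq : (dist cC cA)^2 = (Real.sqrt n * b)^2 := by
      rw [goal2, mul_pow, Real.sq_sqrt hnpos.le]
    have := congrArg Real.sqrt hsq
    rwa [Real.sqrt_sq dist_nonneg, Real.sqrt_sq (mul_nonneg (Real.sqrt_nonneg n) hb0)] at this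
  · rw [← hc]
    have hsq : (dist cA cB)^2 = (Real.sqrt n * c)^2 := by
      rw [goal3, mul_pow, Real.sq_sqrt hnpos.le]
    have := congrArg Real.sqrt hsq
    rwa [Real.sqrt_sq dist_nonneg, Real.sqrt_sq (mul_nonneg (Real.sqrt_nonneg n) hc0)] at this
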